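/- For every natural number ℓ ≥ 2, ∏_{i=0}^{ℓ−1} (ℓ+3i+2)/(ℓ+3i+3) > (ℓ+2)/(2(ℓ+1)), i.e., α^(M)(ℓ) > α^(S)(ℓ). -/

import Mathlib

lemma telescope8 (c : ℝ) (hc : 0 < c) :
    ∀ n : ℕ, ∏ i ∈ Finset.range n, (c + 3 * i) / (c + 3 * i + 3) = c / (c + 3 * n) := by
  intro n
  induction n with
  | zero => simp [hc.ne']
  | succ n ih =>
    rw [Finset.prod_range_succ, ih]
    have h1 : c + 3 * n > 0 := by positivity
    have h2 : c + 3 * n + 3 > 0 := by linarith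
    push_cast
    field_simp
    ring

theorem stmt8 (ℓ : ℕ) (hℓ : 2 ≤ ℓ) :
    ∏ i ∈ Finset.range ℓ, ((ℓ : ℝ) + 3 * i + 2) / ((ℓ : ℝ) + 3 * i + 3) >
      ((ℓ : ℝ) + 2) / (2 * ((ℓ : ℝ) + 1)) := by
  have hl : (2 : ℝ) ≤ (ℓ : ℝ) := by exact_mod_cast hℓ
  set P : ℝ := ∏ i ∈ Finset.range ℓ, ((ℓ : ℝ) + 3 * i + 2) / ((ℓ : ℝ) + 3 * i + 3) with hP
  have hPpos : 0 < P := by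
    apply Finset.prod_pos
    intro i _
    have : (0:ℝ) ≤ i := Nat.cast_nonneg i
    positivity
  have hcube : P ^ 3 ≥ ((ℓ : ℝ) + 1) / ((ℓ : ℝ) + 1 + 3 * ℓ) := by
    have htel := telescope8 ((ℓ : ℝ) + 1) (by linarith) ℓ
    rw [← htel, hP, ← Finset.prod_pow]
    apply Finset.prod_le_prod
    · intro i _
      have : (0:ℝ) ≤ i := Nat.cast_nonneg i
      positivity
    · intro i _
      have hi : (0:ℝ) ≤ i := Nat.cast_nonneg i
      set x : ℝ := (ℓ : ℝ) + 3 * i + 2 with hx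
      have hx4 : 4 ≤ x := by simp [hx]; linarith
      have h1 : (0:ℝ) < x - 1 := by linarith
      have h2 : (0:ℝ) < x + 2 := by linarith
      have h3 : (0:ℝ) < x + 1 := by linarith
      have key : ((ℓ : ℝ) + 1 + 3 * i) / ((ℓ : ℝ) + 1 + 3 * i + 3) = (x - 1) / (x + 2) := by
        rw [hx]; ring_nf
      have : (x - 1) / (x + 2) ≤ (x / (x + 1)) ^ 3 := by
        rw [div_pow, div_le_div_iff₀ h2 (by positivity)]
        nlinarith [sq_nonneg x, sq_nonneg (x+1)]
      calc ((ℓ : ℝ) + 1 + 3 * i) / ((ℓ : ℝ) + 1 + 3 * i + 3) = (x - 1) / (x + 2) := key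
        _ ≤ (x / (x + 1)) ^ 3 := this
        _ = (((ℓ:ℝ) + 3 * i + 2) / ((ℓ:ℝ) + 3 * i + 3)) ^ 3 := by rw [hx]; ring_nf
  have hR : (0:ℝ) < ((ℓ : ℝ) + 2) / (2 * ((ℓ : ℝ) + 1)) := by positivity
  have hfinal : (((ℓ : ℝ) + 2) / (2 * ((ℓ : ℝ) + 1))) ^ 3 < ((ℓ : ℝ) + 1) / ((ℓ : ℝ) + 1 + 3 * ℓ) := by
    rw [div_pow, div_lt_div_iff₀ (by positivity) (by linarith)]
    nlinarith [sq_nonneg ((ℓ:ℝ)), sq_nonneg ((ℓ:ℝ)-2)]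
  have : (((ℓ : ℝ) + 2) / (2 * ((ℓ : ℝ) + 1))) ^ 3 < P ^ 3 := lt_of_lt_of_le hfinal hcube
  exact lt_of_pow_lt_pow_left₀ 3 hPpos.le this
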